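/- The set of eigenvalues (the spectrum) of the adjacency matrix A of the halved cube ½H(D,2) equals { ((D−2i)² − D)/2 : 0 ≤ i ≤ ⌊D/2⌋ }, and these ⌊D/2⌋ + 1 values are pairwise distinct. -/

import Mathlib

open Matrix

/-- Vertex set of the hypercube `H(D,2)`: binary words of length `D`. -/
abbrev Vtx (D : ℕ) := Fin D → ZMod 2

/-- Vertex set of the halved cube: binary words of even Hamming weight. -/
abbrev HVtx (D : ℕ) := {x : Vtx D // Even (hammingNorm x)}

/-- Adjacency matrix of the halved cube `½H(D,2)`. -/
noncomputable def adjHalf (D : ℕ) : Matrix (HVtx D) (HVtx D) ℂ :=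
  fun y z => if hammingNorm (y.val - z.val) = 2 then 1 else 0

/-- Dual adjacency matrix of the halved cube with respect to `x₀`. -/
noncomputable def dualHalf (D : ℕ) (x₀ : HVtx D) : Matrix (HVtx D) (HVtx D) ℂ :=
  Matrix.diagonal fun y => (D : ℂ) - 2 * hammingNorm (x₀.val - y.val)

open Finset

section Aux

lemma zmod2_pow_helper (a b c : ZMod 2) :
    ((-1:ℂ))^((a*(b+c)).val) = (-1)^((a*b).val) * (-1)^((a*c).val) := by
  have key : ∀ a b c : ZMod 2, ((a*(b+c)).val = 0 ∧ (a*b).val + (a*c).val = 0) ∨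
      ((a*(b+c)).val = 1 ∧ (a*b).val + (a*c).val = 1) ∨
      ((a*(b+c)).val = 0 ∧ (a*b).val + (a*c).val = 2) := by decide
  rw [← pow_add]
  rcases key a b c with ⟨h1, h2⟩ | ⟨h1, h2⟩ | ⟨h1, h2⟩ <;> rw [h1, h2] <;> norm_num

lemma neg_one_pow_parity {m n : ℕ} (hmn : ((-1:ℂ))^m = (-1)^n) : Even m ↔ Even n := by
  rcases Nat.even_or_odd m with hm | hm <;> rcases Nat.even_or_odd n with hn | hn
  · simp [hm, hn]
  · rw [hm.neg_one_pow, hn.neg_one_pow] at hmn; norm_num at hmn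
  · rw [hm.neg_one_pow, hn.neg_one_pow] at hmn; norm_num at hmn
  · simp [Nat.even_iff, Nat.odd_iff.mp hm, Nat.odd_iff.mp hn]

/-- The character of `(ZMod 2)^D` indexed by `s`. -/
noncomputable def chi (D : ℕ) (s x : Vtx D) : ℂ := ∏ j, (-1 : ℂ)^((s j * x j).val)

lemma chi_add (D : ℕ) (s x y : Vtx D) : chi D s (x + y) = chi D s x * chi D s y := by
  rw [chi, chi, chi, ← Finset.prod_mul_distrib]
  exact Finset.prod_congr rfl fun j _ => zmod2_pow_helper (s j) (x j) (y j)

lemma chi_zero (D : ℕ) (s : Vtx D) : chi D s 0 = 1 := by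
  simp [chi, show ZMod.val (0 : ZMod 2) = 0 from rfl]

lemma hnorm_eq_sum (D : ℕ) (x : Vtx D) : hammingNorm x = ∑ j, (x j).val := by
  rw [hammingNorm, Finset.card_filter]
  exact Finset.sum_congr rfl fun j _ =>
    (by decide : ∀ a : ZMod 2, (if a ≠ 0 then 1 else 0) = a.val) (x j)

lemma chi_ones (D : ℕ) (z : Vtx D) :
    chi D (fun _ => 1) z = (-1 : ℂ)^(hammingNorm z) := by
  rw [chi, hnorm_eq_sum, ← Finset.prod_pow_eq_pow_sum]
  exact Finset.prod_congr rfl fun j _ => by rw [one_mul]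

lemma parity_lemma (D : ℕ) (x y : Vtx D) (hx : Even (hammingNorm x))
    (hxy : Even (hammingNorm (x + y))) : Even (hammingNorm y) := by
  have h := chi_add D (fun _ => 1) x y
  rw [chi_ones, chi_ones, chi_ones, ← pow_add] at h
  have h2 : Even (hammingNorm x + hammingNorm y) := (neg_one_pow_parity h).mp hxy
  rw [Nat.even_add] at h2
  exact h2.mp hx

noncomputable def aa (D : ℕ) (s : Vtx D) (j : Fin D) : ℂ := (-1 : ℂ)^((s j).val)

/-- indicator vector of a two-element set -/
def ind (D : ℕ) (j k : Fin D) : Vtx D := fun i => if i = j ∨ i = k then 1 else 0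

lemma chi_ind (D : ℕ) (s : Vtx D) (j k : Fin D) (hjk : j ≠ k) :
    chi D s (ind D j k) = aa D s j * aa D s k := by
  rw [chi]
  have h1 : ∀ i, (-1 : ℂ)^((s i * ind D j k i).val) =
      (if i = j then aa D s j else 1) * (if i = k then aa D s k else 1) := by
    intro i
    rw [ind]
    by_cases h : i = j
    · subst h
      simp [hjk, aa]
    · by_cases h' : i = k
      · subst h'
        simp [h, aa]
      · simp [h, h', show ZMod.val (0 : ZMod 2) = 0 from rfl]
  rw [Finset.prod_congr rfl fun i _ => h1 i, Finset.prod_mul_distrib]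
  simp [Finset.prod_ite_eq']

lemma hnorm_ind (D : ℕ) (j k : Fin D) (hjk : j ≠ k) : hammingNorm (ind D j k) = 2 := by
  rw [hammingNorm]
  have : ({i | ind D j k i ≠ 0} : Finset (Fin D)) = {j, k} := by
    ext i
    simp only [Finset.mem_filter, Finset.mem_univ, true_and, Finset.mem_insert,
      Finset.mem_singleton, ind]
    by_cases h : i = j ∨ i = k <;> simp [h] <;> tauto
  rw [this, Finset.card_insert_of_notMem (by simpa using hjk), Finset.card_singleton]

lemma aa_sq (D : ℕ) (s : Vtx D) (j : Fin D) : aa D s j * aa D s j = 1 := by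
  rw [aa, ← pow_add, ← two_mul, pow_mul]
  norm_num

lemma sum_aa (D : ℕ) (s : Vtx D) :
    ∑ j, aa D s j = (D : ℂ) - 2 * (hammingNorm s : ℂ) := by
  have h : ∀ j, aa D s j = 1 - 2 * ((s j).val : ℂ) := by
    intro j
    rw [aa]
    rcases ((by decide : ∀ a : ZMod 2, a.val = 0 ∨ a.val = 1) (s j)) with h | h <;>
      rw [h] <;> norm_num
  rw [Finset.sum_congr rfl fun j _ => h j, Finset.sum_sub_distrib, Finset.sum_const,
    ← Finset.mul_sum, hnorm_eq_sum]
  push_cast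
  simp

lemma pair_sum (D : ℕ) (s : Vtx D) :
    ∑ p ∈ univ.filter (fun p : Fin D × Fin D => p.1 < p.2), aa D s p.1 * aa D s p.2
      = ((∑ j, aa D s j)^2 - (D : ℂ))/2 := by
  have hsq : (∑ j, aa D s j)^2 = ∑ p : Fin D × Fin D, aa D s p.1 * aa D s p.2 := by
    rw [sq, Finset.sum_mul_sum, ← Finset.sum_product']
    rfl
  have hsplit := Finset.sum_filter_add_sum_filter_not (univ : Finset (Fin D × Fin D))
    (fun p => p.1 = p.2) (fun p => aa D s p.1 * aa D s p.2)
  have hdiag : ∑ p ∈ univ.filter (fun p : Fin D × Fin D => p.1 = p.2),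
      aa D s p.1 * aa D s p.2 = (D : ℂ) := by
    rw [Finset.sum_filter]
    rw [Fintype.sum_prod_type]
    have : ∀ j : Fin D, (∑ k, if j = k then aa D s j * aa D s k else 0) = 1 := by
      intro j
      rw [Finset.sum_ite_eq univ j (fun k => aa D s j * aa D s k)]
      simp [aa_sq]
    rw [Finset.sum_congr rfl fun j _ => this j]
    simp
  have hne : ∑ p ∈ univ.filter (fun p : Fin D × Fin D => ¬ p.1 = p.2),
      aa D s p.1 * aa D s p.2
      = 2 * ∑ p ∈ univ.filter (fun p : Fin D × Fin D => p.1 < p.2),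
          aa D s p.1 * aa D s p.2 := by
    have h2 := Finset.sum_filter_add_sum_filter_not
      (univ.filter (fun p : Fin D × Fin D => ¬ p.1 = p.2))
      (fun p => p.1 < p.2) (fun p => aa D s p.1 * aa D s p.2)
    have e1 : (univ.filter (fun p : Fin D × Fin D => ¬ p.1 = p.2)).filter
        (fun p => p.1 < p.2) = univ.filter (fun p : Fin D × Fin D => p.1 < p.2) := by
      rw [Finset.filter_filter]
      apply Finset.filter_congr
      intro p _
      constructor
      · rintro ⟨_, h⟩; exact h
      · intro h; exact ⟨ne_of_lt h, h⟩
    have e2 : ∑ p ∈ (univ.filter (fun p : Fin D × Fin D => ¬ p.1 = p.2)).filter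
        (fun p => ¬ p.1 < p.2), aa D s p.1 * aa D s p.2
        = ∑ p ∈ univ.filter (fun p : Fin D × Fin D => p.1 < p.2),
            aa D s p.1 * aa D s p.2 := by
      apply Finset.sum_nbij' (fun p => Prod.swap p) (fun p => Prod.swap p)
      · intro p hp
        simp only [Finset.mem_filter, Finset.mem_univ, true_and] at hp ⊢
        rcases hp with ⟨h1, h2⟩
        exact lt_of_le_of_ne (not_lt.mp h2) (Ne.symm h1)
      · intro p hp
        simp only [Finset.mem_filter, Finset.mem_univ, true_and] at hp ⊢
        exact ⟨ne_of_gt hp, not_lt.mpr (le_of_lt hp)⟩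
      · intro p _; exact Prod.swap_swap p
      · intro p _; exact Prod.swap_swap p
      · intro p _; exact mul_comm _ _
    rw [e1, e2] at h2
    rw [← h2]; ring
  rw [hdiag, hne] at hsplit
  rw [hsq, ← hsplit]
  ring

lemma ind_inj (D : ℕ) {j k j' k' : Fin D} (h1 : j < k) (h2 : j' < k')
    (h : ind D j k = ind D j' k') : j = j' ∧ k = k' := by
  have key : ∀ i, (i = j ∨ i = k) ↔ (i = j' ∨ i = k') := by
    intro i
    have := congrFun h i
    rw [ind, ind] at this
    by_cases hi : i = j ∨ i = k <;> by_cases hi' : i = j' ∨ i = k' <;>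
      simp [hi, hi'] at this ⊢
  have hj := (key j).mp (Or.inl rfl)
  have hk := (key k).mp (Or.inr rfl)
  have hj' := (key j').mpr (Or.inl rfl)
  have hk' := (key k').mpr (Or.inr rfl)
  have e1 := Fin.lt_iff_val_lt_val.mp h1
  have e2 := Fin.lt_iff_val_lt_val.mp h2
  constructor <;> apply Fin.ext <;>
    rcases hj with rfl | rfl <;> rcases hk with rfl | rfl <;>
    rcases hj' with h3 | h3 <;> rcases hk' with h4 | h4 <;>
    first
      | rfl
      | (try subst h3) <;> (try subst h4) <;> omega

lemma sum_wt2 (D : ℕ) (s : Vtx D) :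
    ∑ e ∈ univ.filter (fun e : Vtx D => hammingNorm e = 2), chi D s e
      = ((∑ j, aa D s j)^2 - (D : ℂ))/2 := by
  rw [← pair_sum D s]
  symm
  apply Finset.sum_bij (fun (p : Fin D × Fin D) _ => ind D p.1 p.2)
  · intro p hp
    simp only [Finset.mem_filter, Finset.mem_univ, true_and] at hp ⊢
    exact hnorm_ind D p.1 p.2 (ne_of_lt hp)
  · intro p hp q hq hpq
    simp only [Finset.mem_filter, Finset.mem_univ, true_and] at hp hq
    obtain ⟨h1, h2⟩ := ind_inj D hp hq hpq
    exact Prod.ext h1 h2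
  · intro e he
    simp only [Finset.mem_filter, Finset.mem_univ, true_and] at he
    rw [hammingNorm] at he
    obtain ⟨a, b, hab, hset⟩ := Finset.card_eq_two.mp he
    have hmem : ∀ i, e i ≠ 0 ↔ (i = a ∨ i = b) := by
      intro i
      have : i ∈ ({i | e i ≠ 0} : Finset (Fin D)) ↔ i ∈ ({a, b} : Finset (Fin D)) := by
        rw [hset]
      simpa using this
    have hval : ∀ i, e i = (if i = a ∨ i = b then 1 else 0) := by
      intro i
      by_cases hi : i = a ∨ i = b
      · rw [if_pos hi]
        exact (by decide : ∀ z : ZMod 2, z ≠ 0 → z = 1) _ ((hmem i).mpr hi)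
      · rw [if_neg hi]
        by_contra hne
        exact hi ((hmem i).mp hne)
    rcases lt_or_gt_of_ne hab with hlt | hgt
    · refine ⟨(a, b), by simpa using hlt, ?_⟩
      funext i
      rw [hval i, ind]
    · refine ⟨(b, a), by simpa using hgt, ?_⟩
      funext i
      rw [hval i, ind]
      congr 1
      simp [or_comm]
  · intro p hp
    simp only [Finset.mem_filter, Finset.mem_univ, true_and] at hp
    exact (chi_ind D s p.1 p.2 (ne_of_lt hp)).symm

lemma sub_eq_add' (D : ℕ) (x y : Vtx D) : x - y = x + y := by
  funext j; exact CharTwo.sub_eq_add (x j) (y j)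

/-- Restriction of the character `chi D s` to the halved cube. -/
noncomputable def evec (D : ℕ) (s : Vtx D) : HVtx D → ℂ := fun y => chi D s y.val

/-- The candidate eigenvalues. -/
noncomputable def lam (D : ℕ) (i : ℕ) : ℂ := (((D : ℂ) - 2 * i) ^ 2 - (D : ℂ)) / 2

lemma eigen_eq (D : ℕ) (s : Vtx D) :
    (adjHalf D).mulVec (evec D s) = lam D (hammingNorm s) • evec D s := by
  funext y
  rw [Matrix.mulVec, dotProduct]
  have step1 : ∀ z : HVtx D, adjHalf D y z * evec D s z
      = if hammingNorm (y.val - z.val) = 2 then chi D s z.val else 0 := by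
    intro z
    rw [adjHalf, evec]
    split <;> simp
  rw [Finset.sum_congr rfl fun z _ => step1 z]
  rw [Finset.sum_subtype (p := fun z : Vtx D => Even (hammingNorm z))
    (univ.filter (fun z : Vtx D => Even (hammingNorm z))) (by simp)
    (fun z => if hammingNorm (y.val - z) = 2 then chi D s z else 0) |>.symm]
  rw [Finset.sum_filter]
  have step3 : ∀ z : Vtx D,
      (if Even (hammingNorm z) then (if hammingNorm (y.val - z) = 2 then chi D s z else 0) else 0)
      = (if hammingNorm (y.val - z) = 2 then chi D s z else 0) := by
    intro z
    by_cases hz : Even (hammingNorm z)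
    · rw [if_pos hz]
    · rw [if_neg hz]
      by_cases h2 : hammingNorm (y.val - z) = 2
      · exfalso
        apply hz
        apply parity_lemma D y.val z y.2
        rw [← sub_eq_add' D y.val z, h2]
        decide
      · rw [if_neg h2]
  rw [Finset.sum_congr rfl fun z _ => step3 z]
  have step4 : ∑ z : Vtx D, (if hammingNorm (y.val - z) = 2 then chi D s z else 0)
      = ∑ z : Vtx D, (if hammingNorm z = 2 then chi D s y.val * chi D s z else 0) := by
    apply Fintype.sum_equiv (Equiv.addLeft y.val)
    intro z
    show (if hammingNorm (y.val - z) = 2 then chi D s z else 0)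
      = (if hammingNorm (y.val + z) = 2 then chi D s y.val * chi D s (y.val + z) else 0)
    have hyy : y.val + (y.val + z) = z := by
      funext j
      show y.val j + (y.val j + z j) = z j
      rw [← add_assoc, CharTwo.add_self_eq_zero, zero_add]
    have hval : chi D s y.val * chi D s (y.val + z) = chi D s z := by
      rw [← chi_add, hyy]
    rw [sub_eq_add' D, hval]
  rw [step4]
  have step5 : ∑ z : Vtx D, (if hammingNorm z = 2 then chi D s y.val * chi D s z else 0)
      = chi D s y.val * ∑ z : Vtx D, (if hammingNorm z = 2 then chi D s z else 0) := by
    rw [Finset.mul_sum]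
    exact Finset.sum_congr rfl fun z _ => by rw [mul_ite, mul_zero]
  rw [step5, ← Finset.sum_filter, sum_wt2, sum_aa]
  show _ = lam D (hammingNorm s) * evec D s y
  rw [lam, evec]
  ring

lemma delta_expand (D : ℕ) (y z : HVtx D) :
    ∑ s : Vtx D, chi D s y.val * chi D s z.val = if y = z then ((2:ℂ)^D) else 0 := by
  have h1 : ∀ s : Vtx D, chi D s y.val * chi D s z.val = chi D s (y.val + z.val) :=
    fun s => (chi_add D s y.val z.val).symm
  rw [Finset.sum_congr rfl fun s _ => h1 s]
  set u := y.val + z.val with hu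
  have h2 : ∑ s : Vtx D, chi D s u = ∏ j, ∑ b : ZMod 2, (-1:ℂ)^((b * u j).val) := by
    rw [← Finset.sum_prod_piFinset (univ : Finset (ZMod 2))
      (fun j b => (-1:ℂ)^((b * u j).val))]
    rw [Fintype.piFinset_univ]
    rfl
  rw [h2]
  have h3 : ∀ j, (∑ b : ZMod 2, (-1:ℂ)^((b * u j).val)) = if u j = 0 then 2 else 0 := by
    intro j
    have := (by decide : ∀ c : ZMod 2, c = 0 ∨ c = 1) (u j)
    rcases this with h | h <;> rw [h]
    · rw [if_pos rfl]
      rw [show (∑ b : ZMod 2, (-1:ℂ)^((b * 0).val)) = _ from Fin.sum_univ_two _]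
      show (-1:ℂ)^0 + (-1)^0 = 2
      norm_num [show ZMod.val ((0 : ZMod 2) * 0) = 0 from rfl,
        show ZMod.val ((1 : ZMod 2) * 0) = 0 from rfl]
    · rw [if_neg (by decide)]
      rw [show (∑ b : ZMod 2, (-1:ℂ)^((b * 1).val)) = _ from Fin.sum_univ_two _]
      show (-1:ℂ)^0 + (-1)^1 = 0
      norm_num [show ZMod.val ((0 : ZMod 2) * 1) = 0 from rfl,
        show ZMod.val ((1 : ZMod 2) * 1) = 1 from rfl,
        show ZMod.val (1 : ZMod 2) = 1 from rfl,
        show ZMod.val (0 : ZMod 2) = 0 from rfl]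
  rw [Finset.prod_congr rfl fun j _ => h3 j]
  by_cases huz : u = 0
  · have hyz : y = z := by
      apply Subtype.ext
      funext j
      have := congrFun huz j
      show y.val j = z.val j
      have h4 : y.val j + z.val j = 0 := this
      have : ∀ a b : ZMod 2, a + b = 0 → a = b := by decide
      exact this _ _ h4
    rw [if_pos hyz]
    rw [Finset.prod_congr rfl fun j _ => if_pos (show u j = 0 from by rw [huz]; rfl)]
    simp
  · have hyz : ¬ y = z := by
      intro h
      apply huz
      subst h
      funext j
      show y.val j + y.val j = 0
      exact CharTwo.add_self_eq_zero _
    rw [if_neg hyz]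
    obtain ⟨j, hj⟩ := Function.ne_iff.mp huz
    exact Finset.prod_eq_zero (Finset.mem_univ j) (if_neg hj)

/-- Product of `adjHalf D - lam D i • 1` for `i < n`. -/
noncomputable def Npow (D : ℕ) : ℕ → Matrix (HVtx D) (HVtx D) ℂ
  | 0 => 1
  | n+1 => Npow D n * (adjHalf D - lam D n • 1)

lemma Npow_mulVec (D : ℕ) {v : HVtx D → ℂ} {μ : ℂ}
    (hv : (adjHalf D).mulVec v = μ • v) (n : ℕ) :
    (Npow D n).mulVec v = (∏ i ∈ range n, (μ - lam D i)) • v := by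
  induction n with
  | zero => simp [Npow]
  | succ n ih =>
    rw [Npow, ← Matrix.mulVec_mulVec]
    have hinner : (adjHalf D - lam D n • 1).mulVec v = (μ - lam D n) • v := by
      rw [Matrix.sub_mulVec, Matrix.smul_mulVec, Matrix.one_mulVec, hv, sub_smul]
    rw [hinner, Matrix.mulVec_smul, ih, Finset.prod_range_succ, smul_smul, mul_comm]

lemma hnorm_le (D : ℕ) (s : Vtx D) : hammingNorm s ≤ D := by
  have := Finset.card_filter_le (univ : Finset (Fin D)) (fun j => s j ≠ 0)
  simpa [hammingNorm] using this

lemma eigen_lam_index (D : ℕ) (s : Vtx D) :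
    ∃ i ≤ D/2, lam D (hammingNorm s) = lam D i := by
  set w := hammingNorm s with hw
  have hwD : w ≤ D := hnorm_le D s
  by_cases h : w ≤ D - w
  · exact ⟨w, by omega, rfl⟩
  · refine ⟨D - w, by omega, ?_⟩
    rw [lam, lam, Nat.cast_sub hwD]
    ring

lemma Npow_total (D : ℕ) : Npow D (D/2 + 1) = 0 := by
  have key : ∀ s : Vtx D, (Npow D (D/2+1)).mulVec (evec D s) = 0 := by
    intro s
    obtain ⟨i, hi, hlam⟩ := eigen_lam_index D s
    rw [Npow_mulVec D (eigen_eq D s)]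
    rw [Finset.prod_eq_zero (Finset.mem_range.mpr (by omega : i < D/2+1)) (by rw [hlam]; ring)]
    simp
  ext z y
  have hsingle : (Pi.single y 1 : HVtx D → ℂ)
      = ((2:ℂ)^D)⁻¹ • ∑ s : Vtx D, chi D s y.val • evec D s := by
    funext w
    rw [Pi.smul_apply, Finset.sum_apply]
    have : ∀ s : Vtx D, (chi D s y.val • evec D s) w = chi D s y.val * chi D s w.val := by
      intro s; rfl
    rw [Finset.sum_congr rfl fun s _ => this s, delta_expand D y w]
    by_cases h : y = w
    · subst h
      rw [if_pos rfl, Pi.single_eq_same]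
      simp
    · rw [if_neg h, Pi.single_eq_of_ne (Ne.symm h)]
      simp
  have h0 : (Npow D (D/2+1)).mulVec (Pi.single y 1) = 0 := by
    rw [hsingle]
    rw [show (Npow D (D/2+1)).mulVec = (Npow D (D/2+1)).mulVecLin from rfl]
    rw [_root_.map_smul, map_sum]
    have : ∀ s : Vtx D, (Npow D (D/2+1)).mulVecLin (chi D s y.val • evec D s) = 0 := by
      intro s
      rw [_root_.map_smul]
      show chi D s y.val • (Npow D (D/2+1)).mulVec (evec D s) = 0
      rw [key s, smul_zero]
    rw [Finset.sum_congr rfl fun s _ => this s]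
    simp
  have := congrFun h0 z
  rw [Matrix.mulVec_single] at this
  simpa using this

lemma hnorm_zero' (D : ℕ) : hammingNorm (0 : Vtx D) = 0 := by
  simp [hammingNorm]

lemma evec_ne_zero (D : ℕ) (s : Vtx D) : evec D s ≠ 0 := by
  intro h
  have hx0 : Even (hammingNorm (0 : Vtx D)) := by rw [hnorm_zero' D]; exact Even.zero
  have := congrFun h ⟨0, hx0⟩
  rw [evec] at this
  simp only [chi_zero] at this
  exact one_ne_zero this

end Aux

theorem stmt16 (D : ℕ) (hD : 3 ≤ D) :
    spectrum ℂ (adjHalf D) =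
      {z : ℂ | ∃ i : ℕ, i ≤ D / 2 ∧ z = (((D : ℂ) - 2 * i) ^ 2 - D) / 2} ∧
    ∀ i ≤ D / 2, ∀ j ≤ D / 2,
      (((D : ℂ) - 2 * i) ^ 2 - D) / 2 = (((D : ℂ) - 2 * j) ^ 2 - D) / 2 → i = j := by
  constructor
  · ext μ
    simp only [Set.mem_setOf_eq]
    constructor
    · intro hμ
      rw [spectrum.mem_iff] at hμ
      have hdet : (μ • (1 : Matrix (HVtx D) (HVtx D) ℂ) - adjHalf D).det = 0 := by
        by_contra h
        exact hμ (by
          rw [Algebra.algebraMap_eq_smul_one]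
          exact (Matrix.isUnit_iff_isUnit_det _).2 (isUnit_iff_ne_zero.2 h))
      obtain ⟨v, hv0, hv⟩ := (Matrix.exists_mulVec_eq_zero_iff).2 hdet
      have heig : (adjHalf D).mulVec v = μ • v := by
        rw [Matrix.sub_mulVec, Matrix.smul_mulVec, Matrix.one_mulVec,
          sub_eq_zero] at hv
        exact hv.symm
      have hN := Npow_mulVec D heig (D/2+1)
      rw [Npow_total D, Matrix.zero_mulVec] at hN
      rcases smul_eq_zero.mp hN.symm with h | h
      · obtain ⟨i, hi, h0⟩ := Finset.prod_eq_zero_iff.mp h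
        refine ⟨i, by
          have := Finset.mem_range.mp hi
          omega, ?_⟩
        have : μ = lam D i := by
          have := sub_eq_zero.mp h0
          exact this
        rw [this, lam]
      · exact absurd h hv0
    · rintro ⟨i, hi, rfl⟩
      have hiD : i < D := by omega
      set s : Vtx D := fun j => if (j : ℕ) < i then 1 else 0 with hs
      have hws : hammingNorm s = i := by
        rw [hammingNorm]
        have hfil : ({j | s j ≠ 0} : Finset (Fin D)) = Finset.Iio (⟨i, hiD⟩ : Fin D) := by
          ext j
          simp only [Finset.mem_filter, Finset.mem_univ, true_and, Finset.mem_Iio, Fin.lt_def]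
          by_cases h : (j : ℕ) < i <;> simp [hs, h]
        rw [hfil, Fin.card_Iio]
      have heig := eigen_eq D s
      rw [hws] at heig
      rw [spectrum.mem_iff]
      intro hu
      rw [Algebra.algebraMap_eq_smul_one] at hu
      have hdet := (Matrix.isUnit_iff_isUnit_det _).1 hu
      have hker : (((((D : ℂ) - 2 * i) ^ 2 - (D : ℂ)) / 2) • (1 : Matrix (HVtx D) (HVtx D) ℂ)
          - adjHalf D).mulVec (evec D s) = 0 := by
        rw [Matrix.sub_mulVec, Matrix.smul_mulVec, Matrix.one_mulVec, heig]
        show _ • evec D s - lam D i • evec D s = 0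
        rw [lam, sub_self]
      have hdet0 := (Matrix.exists_mulVec_eq_zero_iff).1 ⟨evec D s, evec_ne_zero D s, hker⟩
      rw [hdet0] at hdet
      exact (by simp : ¬ IsUnit (0:ℂ)) hdet
  · intro i hi j hj hij
    have h2 : (((D:ℂ) - 2*i) - ((D:ℂ) - 2*j)) * (((D:ℂ) - 2*i) + ((D:ℂ) - 2*j)) = 0 := by
      linear_combination 2 * hij
    rcases mul_eq_zero.mp h2 with h | h
    · have : (i : ℂ) = j := by linear_combination -h/2
      exact_mod_cast this
    · have : ((i + j : ℕ) : ℂ) = (D : ℂ) := by push_cast; linear_combination -h/2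
      have hij' : i + j = D := by exact_mod_cast this
      omega
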